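/- Let Σ be a real symmetric positive definite 2n×2n matrix with blocks Σ = [[Σ_XX, Σ_XP],[Σ_PX, Σ_PP]] (Σ_PX = Σ_XPᵀ) satisfying Σ_XX Σ_XP = Σ_PX Σ_XX, Σ_PX Σ_PP = Σ_PP Σ_XP, and Σ_XX Σ_PP − (Σ_XP)² = (ħ²/4) I. Then all (complex) eigenvalues of the matrix (Σ_XP)² are real and nonnegative, and consequently every eigenvalue of Σ_XX Σ_PP is real and ≥ ħ²/4. -/

import Mathlib

open Matrix ComplexOrder MeasureTheory

noncomputable section

/-- Phase space ℝ^{2n} ≃ ℝⁿ × ℝⁿ, with coordinates z = (x,p). -/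
abbrev PS (n : ℕ) := Fin n ⊕ Fin n → ℝ

/-- The standard symplectic matrix J = [[0, I], [-I, 0]]. -/
def Jmat (n : ℕ) : Matrix (Fin n ⊕ Fin n) (Fin n ⊕ Fin n) ℝ :=
  Matrix.fromBlocks 0 1 (-1) 0

/-- The standard symplectic form ω(z,z′) = (Jz)·z′. -/
def symp (n : ℕ) (z z' : PS n) : ℝ := (Jmat n).mulVec z ⬝ᵥ z'

/-- The symplectic group Sp(n) = {S : SᵀJS = J}. -/
def Sp (n : ℕ) : Set (Matrix (Fin n ⊕ Fin n) (Fin n ⊕ Fin n) ℝ) :=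
  {S | Sᵀ * Jmat n * S = Jmat n}

/-- Spectrum of a Hermitian complex matrix consists of its (real) eigenvalues. -/
lemma herm_spec_aux {m : Type*} [Fintype m] [DecidableEq m] {a : Matrix m m ℂ}
    (ha : a.IsHermitian) {μ : ℂ} (hμ : μ ∈ spectrum ℂ a) :
    ∃ i, μ = Complex.ofReal (ha.eigenvalues i) := by
  conv at hμ => rw [ha.spectral_theorem]
  rw [Unitary.conjStarAlgAut_apply, Unitary.spectrum_star_right_conjugate, spectrum_diagonal] at hμ
  obtain ⟨i, hi⟩ := hμ
  exact ⟨i, hi.symm⟩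

/-- conjTranspose of a real-entried complex matrix is the map of the transpose. -/
lemma map_conjTranspose_aux {m : Type*} (M : Matrix m m ℝ) :
    (M.map Complex.ofReal)ᴴ = Mᵀ.map Complex.ofReal := by
  ext i j
  simp [Matrix.conjTranspose_apply, Complex.conj_ofReal]

/-- `Matrix.map` along `Complex.ofReal` is multiplicative. -/
lemma map_mul_aux {m : Type*} [Fintype m] (P Q : Matrix m m ℝ) :
    (P * Q).map Complex.ofReal = P.map Complex.ofReal * Q.map Complex.ofReal := by
  ext i j
  simp [Matrix.mul_apply, Matrix.map_apply]

open scoped MatrixOrder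

/-- For a pure Gaussian covariance matrix, the eigenvalues of (Σ_XP)² are real and ≥ 0,
and consequently every eigenvalue of Σ_XX Σ_PP is real and ≥ ℏ²/4. -/
theorem eigenvalues_sq_offdiag_nonneg (n : ℕ) (ℏ : ℝ) (hℏ : 0 < ℏ)
    (Sxx Sxp Spx Spp : Matrix (Fin n) (Fin n) ℝ)
    (hSig : (Matrix.fromBlocks Sxx Sxp Spx Spp).PosDef)
    (hSpx : Spx = Sxpᵀ)
    (h1 : Sxx * Sxp = Spx * Sxx)
    (h2 : Spx * Spp = Spp * Sxp)
    (h3 : Sxx * Spp - Sxp * Sxp = (ℏ ^ 2 / 4) • (1 : Matrix (Fin n) (Fin n) ℝ)) :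
    (∀ μ ∈ spectrum ℂ ((Sxp * Sxp).map (Complex.ofReal)), μ.im = 0 ∧ 0 ≤ μ.re) ∧
    (∀ μ ∈ spectrum ℂ ((Sxx * Spp).map (Complex.ofReal)), μ.im = 0 ∧ ℏ ^ 2 / 4 ≤ μ.re) := by
  classical
  -- Sxx is positive definite
  have hSxxPD : Sxx.PosDef := by
    refine Matrix.PosDef.of_dotProduct_mulVec_pos ?_ ?_
    · ext i j
      have h := congrFun (congrFun hSig.1 (Sum.inl i)) (Sum.inl j)
      simpa using h
    · intro x hx
      have hz : (Sum.elim x 0 : Fin n ⊕ Fin n → ℝ) ≠ 0 := by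
        intro h
        apply hx
        funext i
        exact congrFun h (Sum.inl i)
      have := hSig.dotProduct_mulVec_pos hz
      simpa [fromBlocks_mulVec, sumElim_dotProduct_sumElim] using this
  -- the positive square root A of Sxx
  set A := CFC.sqrt Sxx with hAdef
  have hAA : A * A = Sxx := CFC.sqrt_mul_sqrt_self Sxx hSxxPD.posSemidef.nonneg
  have hAherm : Aᴴ = A := (CFC.sqrt_nonneg Sxx).posSemidef.1
  have hAT : Aᵀ = A := by
    ext i j
    simpa using congrFun (congrFun hAherm i) j
  have hAdet : IsUnit A.det := by
    have hdetSxx : (0:ℝ) < Sxx.det := hSxxPD.det_pos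
    have hsq : A.det * A.det = Sxx.det := by rw [← Matrix.det_mul, hAA]
    have : A.det ≠ 0 := by
      intro h
      rw [h, mul_zero] at hsq
      exact hdetSxx.ne' hsq.symm
    exact this.isUnit
  -- complexifications
  set B : Matrix (Fin n) (Fin n) ℂ := A.map Complex.ofReal with hBdef
  set X : Matrix (Fin n) (Fin n) ℂ := Sxp.map Complex.ofReal with hXdef
  set Y : Matrix (Fin n) (Fin n) ℂ := Spx.map Complex.ofReal with hYdef
  have hBdet : IsUnit B.det := by
    have : B.det = (A.det : ℂ) := by
      rw [hBdef, ← Complex.ofRealHom_eq_coe, RingHom.map_det]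
      rfl
    rw [this]
    simp only [isUnit_iff_ne_zero, ne_eq, Complex.ofReal_eq_zero]
    exact fun h => by simp [h] at hAdet
  have hBunit : IsUnit B := (Matrix.isUnit_iff_isUnit_det B).mpr hBdet
  set u : (Matrix (Fin n) (Fin n) ℂ)ˣ := hBunit.unit with hudef
  have hu : (u : Matrix (Fin n) (Fin n) ℂ) = B := hBunit.unit_spec
  have huinv : ((u⁻¹ : (Matrix (Fin n) (Fin n) ℂ)ˣ) : Matrix (Fin n) (Fin n) ℂ) = B⁻¹ := by
    rw [Matrix.coe_units_inv, hu]
  have hBH : Bᴴ = B := by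
    rw [hBdef, map_conjTranspose_aux, hAT]
  have hXH : Xᴴ = Y := by
    rw [hXdef, map_conjTranspose_aux, hYdef, hSpx]
  have hBl : B⁻¹ * B = 1 := Matrix.nonsing_inv_mul B hBdet
  have hBr : B * B⁻¹ = 1 := Matrix.mul_nonsing_inv B hBdet
  have hBl' : ∀ Z : Matrix (Fin n) (Fin n) ℂ, B * (B⁻¹ * Z) = Z := fun Z => by
    rw [← Matrix.mul_assoc, hBr, Matrix.one_mul]
  have hBr' : ∀ Z : Matrix (Fin n) (Fin n) ℂ, B⁻¹ * (B * Z) = Z := fun Z => by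
    rw [← Matrix.mul_assoc, hBl, Matrix.one_mul]
  -- commutation relation mapped to ℂ
  have hE : Y * (B * B) = (B * B) * X := by
    rw [hBdef, hXdef, hYdef, ← map_mul_aux, hAA, ← map_mul_aux, ← map_mul_aux, h1]
  -- the conjugated matrix M
  set M : Matrix (Fin n) (Fin n) ℂ := B * X * B⁻¹ with hMdef
  have key : B⁻¹ * Y * B = M := by
    refine hBunit.mul_left_cancel ?_
    refine hBunit.mul_right_cancel ?_
    simp only [hMdef, Matrix.mul_assoc, hBl', hBr', hBl, hBr, Matrix.mul_one]
    simpa [Matrix.mul_assoc] using hE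
  have hMH : Mᴴ = M := by
    rw [hMdef, Matrix.conjTranspose_mul, Matrix.conjTranspose_mul, hXH]
    rw [Matrix.conjTranspose_nonsing_inv, hBH]
    rw [← Matrix.mul_assoc]
    exact key
  -- M * M is positive semidefinite
  have hN : (M * M).PosSemidef := by
    have := Matrix.posSemidef_conjTranspose_mul_self M
    rwa [hMH] at this
  -- X * X is conjugate to M * M
  have hXX : (Sxp * Sxp).map Complex.ofReal = B⁻¹ * (M * M) * B := by
    have h5 : (Sxp * Sxp).map Complex.ofReal = X * X := map_mul_aux Sxp Sxp
    rw [h5, hMdef]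
    simp only [Matrix.mul_assoc, hBl', hBr', hBl, Matrix.mul_one]
  have hspec1 : spectrum ℂ ((Sxp * Sxp).map Complex.ofReal) = spectrum ℂ (M * M) := by
    rw [hXX, ← hu, ← Matrix.coe_units_inv]
    exact spectrum.units_conjugate'
  have part1 : ∀ μ ∈ spectrum ℂ ((Sxp * Sxp).map (Complex.ofReal)), μ.im = 0 ∧ 0 ≤ μ.re := by
    intro μ hμ
    rw [hspec1] at hμ
    obtain ⟨i, rfl⟩ := herm_spec_aux hN.1 hμ
    refine ⟨Complex.ofReal_im _, ?_⟩
    simpa using hN.eigenvalues_nonneg i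
  refine ⟨part1, ?_⟩
  -- Sxx * Spp = (ℏ²/4) • 1 + Sxp * Sxp
  have h4 : Sxx * Spp = (ℏ ^ 2 / 4) • (1 : Matrix (Fin n) (Fin n) ℝ) + Sxp * Sxp :=
    eq_add_of_sub_eq h3
  have hmap : (Sxx * Spp).map Complex.ofReal
      = algebraMap ℂ (Matrix (Fin n) (Fin n) ℂ) ((ℏ ^ 2 / 4 : ℝ) : ℂ)
        + (Sxp * Sxp).map Complex.ofReal := by
    rw [h4]
    ext i j
    simp [Matrix.map_apply, Matrix.add_apply, Matrix.smul_apply, Matrix.one_apply,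
      Matrix.algebraMap_matrix_apply, apply_ite]
  intro μ hμ
  rw [hmap, ← spectrum.singleton_add_eq, Set.singleton_add] at hμ
  obtain ⟨ν, hν, rfl⟩ := hμ
  obtain ⟨hνim, hνre⟩ := part1 ν hν
  constructor
  · simp only [Complex.add_im, Complex.ofReal_im, hνim, add_zero]
  · simp only [Complex.add_re, Complex.ofReal_re]
    linarith
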